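/- There is a well-defined group homomorphism φ: Br_n(A) → St_n(A) ⋊ Br_n determined by φ(y_i^a) = (x_{i,i+1}(a), y_i), where Br_n acts on St_n(A) through the symmetric group S_n permuting indices. -/

import Mathlib

/-- Relators of the parametrized braid group `Br_{n+1}(A)` of the introduction:
generators `y i a` for `i : Fin n` (representing `y_{i+1}^a`), `a : A`, with
relations (A1), (A1×A1), (A2). -/
def pRels (n : ℕ) (A : Type) [NonUnitalRing A] : Set (FreeGroup (Fin n × A)) :=
  {r | (∃ (i : Fin n) (a b : A),
          r = FreeGroup.of (i, a) * FreeGroup.of (i, (0:A)) * FreeGroup.of (i, b) *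
              (FreeGroup.of (i, (0:A)) * FreeGroup.of (i, (0:A)) * FreeGroup.of (i, a + b))⁻¹) ∨
       (∃ (i j : Fin n) (a b : A), (i : ℕ) + 2 ≤ (j : ℕ) ∧
          r = FreeGroup.of (i, a) * FreeGroup.of (j, b) *
              (FreeGroup.of (j, b) * FreeGroup.of (i, a))⁻¹) ∨
       (∃ (i j : Fin n) (a b c : A), (i : ℕ) + 1 = (j : ℕ) ∧
          r = FreeGroup.of (i, a) * FreeGroup.of (j, b) * FreeGroup.of (i, c) *
              (FreeGroup.of (j, c) * FreeGroup.of (i, b + a * c) * FreeGroup.of (j, a))⁻¹)}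

/-- The parametrized braid group `Br_{n+1}(A)`. -/
abbrev PBraid (n : ℕ) (A : Type) [NonUnitalRing A] := PresentedGroup (pRels n A)

/-- The generator `y_{i+1}^a` of the parametrized braid group. -/
def y {n : ℕ} {A : Type} [NonUnitalRing A] (i : Fin n) (a : A) : PBraid n A :=
  PresentedGroup.of (i, a)

/-- Relators of the classical Artin braid group `Br_{n+1}` with generators
`bgen i`, `i : Fin n`. -/
def bRels (n : ℕ) : Set (FreeGroup (Fin n)) :=
  {r | (∃ i j : Fin n, (i : ℕ) + 2 ≤ (j : ℕ) ∧
          r = FreeGroup.of i * FreeGroup.of j * (FreeGroup.of j * FreeGroup.of i)⁻¹) ∨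
       (∃ i j : Fin n, (i : ℕ) + 1 = (j : ℕ) ∧
          r = FreeGroup.of i * FreeGroup.of j * FreeGroup.of i *
              (FreeGroup.of j * FreeGroup.of i * FreeGroup.of j)⁻¹)}

/-- The classical Artin braid group `Br_{n+1}`. -/
abbrev Braid (n : ℕ) := PresentedGroup (bRels n)

/-- The generator `y_{i+1}` of the braid group. -/
def bgen {n : ℕ} (i : Fin n) : Braid n := PresentedGroup.of i

/-- Generators of the Steinberg group: pairs of distinct indices with a ring element. -/
def StGen (n : ℕ) (A : Type) : Type := {p : Fin n × Fin n // p.1 ≠ p.2} × A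

/-- The free-group generator `x_{ij}(a)`. -/
def xg {n : ℕ} {A : Type} (i j : Fin n) (h : i ≠ j) (a : A) : FreeGroup (StGen n A) :=
  FreeGroup.of (⟨(i, j), h⟩, a)

/-- Relators (St0), (St1), (St2) of the Steinberg group `St_n(A)`. -/
def stRels (n : ℕ) (A : Type) [NonUnitalRing A] : Set (FreeGroup (StGen n A)) :=
  {r | (∃ (i j : Fin n) (h : i ≠ j) (a b : A),
          r = xg i j h a * xg i j h b * (xg i j h (a + b))⁻¹) ∨
       (∃ (i j k l : Fin n) (hij : i ≠ j) (hkl : k ≠ l) (a b : A), i ≠ l ∧ j ≠ k ∧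
          r = xg i j hij a * xg k l hkl b * (xg k l hkl b * xg i j hij a)⁻¹) ∨
       (∃ (i j k : Fin n) (hij : i ≠ j) (hjk : j ≠ k) (hik : i ≠ k) (a b : A),
          r = xg i j hij a * xg j k hjk b *
              (xg j k hjk b * xg i k hik (a * b) * xg i j hij a)⁻¹)}

/-- The Steinberg group `St_n(A)`. -/
abbrev Steinberg (n : ℕ) (A : Type) [NonUnitalRing A] := PresentedGroup (stRels n A)

/-- The generator `x_{ij}(a)` of the Steinberg group. -/
def x {n : ℕ} {A : Type} [NonUnitalRing A] (i j : Fin n) (h : i ≠ j) (a : A) :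
    Steinberg n A := PresentedGroup.of (⟨(i, j), h⟩, a)

section Aux

lemma mk_rel_one {α : Type*} {rels : Set (FreeGroup α)} {r : FreeGroup α} (h : r ∈ rels) :
    PresentedGroup.mk rels r = 1 :=
  (QuotientGroup.eq_one_iff _).mpr (Subgroup.subset_normalClosure h)

variable {n : ℕ} {A : Type} [NonUnitalRing A]

lemma x_congr {j k j' k' : Fin n} (h : j ≠ k) (h' : j' ≠ k') (hj : j = j') (hk : k = k')
    (a : A) : x j k h a = x j' k' h' a := by subst hj; subst hk; rfl

lemma st_add (i j : Fin n) (h : i ≠ j) (a b : A) :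
    x i j h a * x i j h b = x i j h (a + b) := by
  have h1 := mk_rel_one (rels := stRels n A) (Or.inl ⟨i, j, h, a, b, rfl⟩)
  rw [map_mul, map_inv, mul_inv_eq_one, map_mul] at h1
  exact h1

lemma st_zero (i j : Fin n) (h : i ≠ j) : x i j h (0 : A) = 1 := by
  have h1 := st_add i j h (0 : A) 0
  rw [add_zero] at h1
  exact mul_left_cancel (a := x i j h (0 : A)) (by rw [h1, mul_one])

lemma st_comm (i j k l : Fin n) (hij : i ≠ j) (hkl : k ≠ l) (hil : i ≠ l) (hjk : j ≠ k)
    (a b : A) : x i j hij a * x k l hkl b = x k l hkl b * x i j hij a := by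
  have h1 := mk_rel_one (rels := stRels n A)
    (Or.inr (Or.inl ⟨i, j, k, l, hij, hkl, a, b, hil, hjk, rfl⟩))
  rw [map_mul, map_inv, mul_inv_eq_one, map_mul] at h1
  exact h1

lemma st_two (i j k : Fin n) (hij : i ≠ j) (hjk : j ≠ k) (hik : i ≠ k) (a b : A) :
    x i j hij a * x j k hjk b = x j k hjk b * x i k hik (a * b) * x i j hij a := by
  have h1 := mk_rel_one (rels := stRels n A)
    (Or.inr (Or.inr ⟨i, j, k, hij, hjk, hik, a, b, rfl⟩))
  rw [map_mul, map_inv, mul_inv_eq_one, map_mul, map_mul] at h1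
  exact h1

lemma br_comm (i j : Fin n) (h : (i : ℕ) + 2 ≤ (j : ℕ)) :
    bgen i * bgen j = bgen j * bgen i := by
  have h1 := mk_rel_one (rels := bRels n) (Or.inl ⟨i, j, h, rfl⟩)
  rw [map_mul, map_inv, mul_inv_eq_one, map_mul] at h1
  exact h1

lemma br_braid (i j : Fin n) (h : (i : ℕ) + 1 = (j : ℕ)) :
    bgen i * bgen j * bgen i = bgen j * bgen i * bgen j := by
  have h1 := mk_rel_one (rels := bRels n) (Or.inr ⟨i, j, h, rfl⟩)
  rw [map_mul, map_inv, mul_inv_eq_one, map_mul, map_mul] at h1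
  exact h1

end Aux

/-- There is a well-defined group homomorphism
`φ : Br_n(A) → St_n(A) ⋊ Br_n` determined by `φ(y_i^a) = (x_{i,i+1}(a), y_i)`,
where `Br_n` acts on `St_n(A)` through the symmetric group `S_n` permuting
indices (`act` is any such action, characterized on generators). -/
theorem stmt8 (n : ℕ) (A : Type) [NonUnitalRing A]
    (act : Braid n →* MulAut (Steinberg (n + 1) A))
    (hact : ∀ (i : Fin n) (j k : Fin (n + 1)) (h : j ≠ k) (a : A),
        act (bgen i) (x j k h a) =
          x (Equiv.swap i.castSucc i.succ j) (Equiv.swap i.castSucc i.succ k)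
            ((Equiv.swap i.castSucc i.succ).injective.ne h) a) :
    ∃ φ : PBraid n A →* Steinberg (n + 1) A ⋊[act] Braid n,
      ∀ (i : Fin n) (a : A),
        φ (y i a) = ⟨x i.castSucc i.succ (Fin.castSucc_lt_succ : i.castSucc < i.succ).ne a, bgen i⟩ := by
  have act_x : ∀ (i : Fin n) (j k j' k' : Fin (n + 1)) (h : j ≠ k) (h' : j' ≠ k'),
      Equiv.swap i.castSucc i.succ j = j' → Equiv.swap i.castSucc i.succ k = k' →
      ∀ a : A, act (bgen i) (x j k h a) = x j' k' h' a := by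
    intro i j k j' k' h h' hj hk a
    rw [hact]
    exact x_congr _ _ hj hk a
  have key : ∀ r ∈ pRels n A,
      FreeGroup.lift (fun p : Fin n × A =>
        (⟨x p.1.castSucc p.1.succ (Fin.castSucc_lt_succ : p.1.castSucc < p.1.succ).ne p.2, bgen p.1⟩ :
          Steinberg (n + 1) A ⋊[act] Braid n)) r = 1 := by
    intro r hr
    rcases hr with ⟨i, a, b, rfl⟩ | ⟨i, j, a, b, hij, rfl⟩ | ⟨i, j, a, b, c, hij, rfl⟩
    · -- (A1)
      have hpq : i.castSucc ≠ i.succ := (Fin.castSucc_lt_succ : i.castSucc < i.succ).ne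
      have e1 : ∀ t : A, act (bgen i) (x i.castSucc i.succ hpq t) =
          x i.succ i.castSucc hpq.symm t :=
        act_x i _ _ _ _ hpq hpq.symm (Equiv.swap_apply_left _ _) (Equiv.swap_apply_right _ _)
      have e2 : ∀ t : A, act (bgen i) (x i.succ i.castSucc hpq.symm t) =
          x i.castSucc i.succ hpq t :=
        act_x i _ _ _ _ hpq.symm hpq (Equiv.swap_apply_right _ _) (Equiv.swap_apply_left _ _)
      simp only [map_mul, map_inv, FreeGroup.lift_apply_of, mul_inv_eq_one]
      refine SemidirectProduct.ext ?_ rfl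
      simp only [SemidirectProduct.mul_left, SemidirectProduct.mul_right, map_mul,
        MulAut.mul_apply, e1, e2]
      simp only [st_zero, one_mul, mul_one, st_add]
    · -- (A1×A1)
      have hpq : i.castSucc ≠ i.succ := (Fin.castSucc_lt_succ : i.castSucc < i.succ).ne
      have huv : j.castSucc ≠ j.succ := (Fin.castSucc_lt_succ : j.castSucc < j.succ).ne
      have h1 : j.castSucc ≠ i.castSucc :=
        Fin.ne_of_val_ne (by simp only [Fin.coe_castSucc]; omega)
      have h2 : j.castSucc ≠ i.succ :=
        Fin.ne_of_val_ne (by simp only [Fin.coe_castSucc, Fin.val_succ]; omega)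
      have h3 : j.succ ≠ i.castSucc :=
        Fin.ne_of_val_ne (by simp only [Fin.coe_castSucc, Fin.val_succ]; omega)
      have h4 : j.succ ≠ i.succ := Fin.ne_of_val_ne (by simp only [Fin.val_succ]; omega)
      have e1 : ∀ t : A, act (bgen i) (x j.castSucc j.succ huv t) =
          x j.castSucc j.succ huv t :=
        act_x i _ _ _ _ huv huv (Equiv.swap_apply_of_ne_of_ne h1 h2)
          (Equiv.swap_apply_of_ne_of_ne h3 h4)
      have e2 : ∀ t : A, act (bgen j) (x i.castSucc i.succ hpq t) =
          x i.castSucc i.succ hpq t :=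
        act_x j _ _ _ _ hpq hpq (Equiv.swap_apply_of_ne_of_ne h1.symm h3.symm)
          (Equiv.swap_apply_of_ne_of_ne h2.symm h4.symm)
      simp only [map_mul, map_inv, FreeGroup.lift_apply_of, mul_inv_eq_one]
      refine SemidirectProduct.ext ?_ ?_
      · simp only [SemidirectProduct.mul_left, SemidirectProduct.mul_right, map_mul,
          MulAut.mul_apply, e1, e2]
        exact st_comm _ _ _ _ hpq huv h3.symm h2.symm a b
      · simp only [SemidirectProduct.mul_right]
        exact br_comm i j hij
    · -- (A2)
      have hpq : i.castSucc ≠ i.succ := (Fin.castSucc_lt_succ : i.castSucc < i.succ).ne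
      have hJ : j.castSucc ≠ j.succ := (Fin.castSucc_lt_succ : j.castSucc < j.succ).ne
      have hjc : j.castSucc = i.succ :=
        Fin.ext (by simp only [Fin.coe_castSucc, Fin.val_succ]; omega)
      have hqv : i.succ ≠ j.succ := Fin.ne_of_val_ne (by simp only [Fin.val_succ]; omega)
      have hpv : i.castSucc ≠ j.succ :=
        Fin.ne_of_val_ne (by simp only [Fin.coe_castSucc, Fin.val_succ]; omega)
      have e0 : ∀ t : A, x j.castSucc j.succ hJ t = x i.succ j.succ hqv t := fun t =>
        x_congr hJ hqv hjc rfl t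
      have a1 : ∀ t : A, act (bgen i) (x i.succ j.succ hqv t) =
          x i.castSucc j.succ hpv t :=
        act_x i _ _ _ _ hqv hpv (Equiv.swap_apply_right _ _)
          (Equiv.swap_apply_of_ne_of_ne hpv.symm hqv.symm)
      have a2 : ∀ t : A, act (bgen i) (x i.castSucc j.succ hpv t) =
          x i.succ j.succ hqv t :=
        act_x i _ _ _ _ hpv hqv (Equiv.swap_apply_left _ _)
          (Equiv.swap_apply_of_ne_of_ne hpv.symm hqv.symm)
      have b1 : ∀ t : A, act (bgen j) (x i.castSucc i.succ hpq t) =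
          x i.castSucc j.succ hpv t :=
        act_x j _ _ _ _ hpq hpv
          (Equiv.swap_apply_of_ne_of_ne (fun hE => hpq (hE.trans hjc)) hpv)
          (by rw [hjc]; exact Equiv.swap_apply_left _ _)
      have b2 : ∀ t : A, act (bgen j) (x i.castSucc j.succ hpv t) =
          x i.castSucc i.succ hpq t :=
        act_x j _ _ _ _ hpv hpq
          (Equiv.swap_apply_of_ne_of_ne (fun hE => hpq (hE.trans hjc)) hpv)
          ((Equiv.swap_apply_right _ _).trans hjc)
      simp only [map_mul, map_inv, FreeGroup.lift_apply_of, mul_inv_eq_one]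
      refine SemidirectProduct.ext ?_ ?_
      · simp only [SemidirectProduct.mul_left, SemidirectProduct.mul_right, map_mul,
          MulAut.mul_apply, e0, a1, a2, b1, b2]
        have c1 : x i.castSucc i.succ hpq a * x i.castSucc j.succ hpv b =
            x i.castSucc j.succ hpv b * x i.castSucc i.succ hpq a :=
          st_comm _ _ _ _ hpq hpv hpv hpq.symm a b
        have c2 : x i.castSucc i.succ hpq a * x i.succ j.succ hqv c =
            x i.succ j.succ hqv c * x i.castSucc j.succ hpv (a * c) *
              x i.castSucc i.succ hpq a :=
          st_two _ _ _ hpq hqv hpv a c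
        have c3 : x i.castSucc j.succ hpv b * x i.succ j.succ hqv c =
            x i.succ j.succ hqv c * x i.castSucc j.succ hpv b :=
          st_comm _ _ _ _ hpv hqv hpv hqv.symm b c
        have c4 : x i.castSucc j.succ hpv b * x i.castSucc j.succ hpv (a * c) =
            x i.castSucc j.succ hpv (b + a * c) := st_add _ _ hpv b (a * c)
        rw [c1, mul_assoc, c2, ← c4]
        simp only [← mul_assoc]
        rw [c3]
      · simp only [SemidirectProduct.mul_right]
        exact br_braid i j hij
  exact ⟨PresentedGroup.toGroup key, fun i a => PresentedGroup.toGroup.of key⟩
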